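/- Let F(Δ) = ⟨S, Δ + P*⟩ − log det(Δ + P*) + α⟨G, |Δ + P*|⟩ on F = {Δ ∈ 𝕊^n : a·I ⪯ Δ + P* ⪯ b·I}, where a·I ⪯ P* ⪯ b·I, 0 < a ≤ b, α > 0, and G has entries in (0, G_max]. Suppose |S_{ij} − C*_{ij}| ≤ α for all i,j, where C* = (P*)^{-1}. Then every Δ ∈ F with ‖Δ‖_F > 2b²(1 + G_max)αn satisfies F(Δ) > F(0). Consequently the minimizer Δ̂ of F over F satisfies ‖Δ̂‖_F ≤ 2b²(1 + G_max)αn. -/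

import Mathlib

open Matrix
open scoped InnerProductSpace

lemma f_deriv {lam b x : ℝ} (hl : lam ≠ 0) (hb : b ≠ 0) (hx : x ≠ 0) :
    HasDerivAt (fun x : ℝ => x / lam - Real.log x - (x - lam) ^ 2 / (2 * b ^ 2))
      ((x - lam) * (b ^ 2 - lam * x) / (lam * x * b ^ 2)) x := by
  have h1 : HasDerivAt (fun x : ℝ => x / lam) (1 / lam) x := by
    simpa using (hasDerivAt_id x).div_const lam
  have h2 := Real.hasDerivAt_log hx
  have h3 : HasDerivAt (fun x : ℝ => (x - lam) ^ 2 / (2 * b ^ 2))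
      ((2 * (x - lam)) / (2 * b ^ 2)) x := by
    simpa using (((hasDerivAt_id x).sub_const lam).pow 2).div_const (2 * b ^ 2)
  have h := (h1.sub h2).sub h3
  refine h.congr_deriv ?_
  field_simp

lemma scalar_key {b lam mu : ℝ} (hlam : 0 < lam) (hlb : lam ≤ b) (hmu : 0 < mu)
    (hmb : mu ≤ b) :
    Real.log mu - Real.log lam ≤ mu / lam - 1 - (mu - lam) ^ 2 / (2 * b ^ 2) := by
  have hb : 0 < b := lt_of_lt_of_le hlam hlb
  set f : ℝ → ℝ := fun x => x / lam - Real.log x - (x - lam) ^ 2 / (2 * b ^ 2) with hf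
  have hfl : f lam = 1 - Real.log lam := by
    simp [hf, div_self hlam.ne']
  have hcont : ∀ c d : ℝ, 0 < c → ContinuousOn f (Set.Icc c d) := by
    intro c d hc
    apply ContinuousOn.sub (ContinuousOn.sub (by fun_prop) ?_) (by fun_prop)
    exact Real.continuousOn_log.mono (fun x hx => by
      simp only [Set.mem_compl_iff, Set.mem_singleton_iff]
      exact ne_of_gt (lt_of_lt_of_le hc hx.1))
  have hdiff : ∀ c d : ℝ, 0 < c → DifferentiableOn ℝ f (interior (Set.Icc c d)) := by
    intro c d hc
    rw [interior_Icc]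
    intro x hx
    exact ((f_deriv hlam.ne' hb.ne' (lt_trans hc hx.1).ne').differentiableAt).differentiableWithinAt
  have key : f lam ≤ f mu := by
    rcases le_total mu lam with hcase | hcase
    · have hanti : AntitoneOn f (Set.Icc mu lam) := by
        apply antitoneOn_of_deriv_nonpos (convex_Icc mu lam) (hcont mu lam hmu)
          (hdiff mu lam hmu)
        intro x hx
        rw [interior_Icc] at hx
        have hx0 : 0 < x := lt_trans hmu hx.1
        rw [(f_deriv hlam.ne' hb.ne' hx0.ne').deriv]
        apply div_nonpos_of_nonpos_of_nonneg
        · apply mul_nonpos_of_nonpos_of_nonneg (by linarith [hx.2])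
          nlinarith [hx.2, hlam, hlb]
        · positivity
      exact hanti ⟨le_rfl, hcase⟩ ⟨hcase, le_rfl⟩ hcase
    · have hmono : MonotoneOn f (Set.Icc lam b) := by
        apply monotoneOn_of_deriv_nonneg (convex_Icc lam b) (hcont lam b hlam)
          (hdiff lam b hlam)
        intro x hx
        rw [interior_Icc] at hx
        have hx0 : 0 < x := lt_trans hlam hx.1
        rw [(f_deriv hlam.ne' hb.ne' hx0.ne').deriv]
        apply div_nonneg
        · apply mul_nonneg (by linarith [hx.1])
          nlinarith [hx.2, hlam, hlb]
        · positivity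
      exact hmono ⟨le_rfl, hlb⟩ ⟨hcase, hmb⟩ hcase
  have h2 := hfl ▸ key
  simp only [hf] at h2
  linarith

lemma spectral_real {n : ℕ} {A : Matrix (Fin n) (Fin n) ℝ} {a b : ℝ} (hA : A.IsHermitian)
    (h1 : (A - a • (1 : Matrix (Fin n) (Fin n) ℝ)).PosSemidef)
    (h2 : (b • (1 : Matrix (Fin n) (Fin n) ℝ) - A).PosSemidef) :
    ∃ (U : Matrix (Fin n) (Fin n) ℝ) (lam : Fin n → ℝ),
      U * Uᵀ = 1 ∧ Uᵀ * U = 1 ∧ A = U * diagonal lam * Uᵀ ∧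
      (∀ i, a ≤ lam i ∧ lam i ≤ b) ∧ A.det = ∏ i, lam i := by
  refine ⟨(hA.eigenvectorUnitary : Matrix (Fin n) (Fin n) ℝ), hA.eigenvalues, ?_, ?_, ?_, ?_, ?_⟩
  · have := (Matrix.mem_unitaryGroup_iff).mp (hA.eigenvectorUnitary).2
    rwa [star_eq_conjTranspose, conjTranspose_eq_transpose_of_trivial] at this
  · have := (Matrix.mem_unitaryGroup_iff').mp (hA.eigenvectorUnitary).2
    rwa [star_eq_conjTranspose, conjTranspose_eq_transpose_of_trivial] at this
  · have := hA.spectral_theorem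
    rwa [Unitary.conjStarAlgAut_apply, star_eq_conjTranspose, conjTranspose_eq_transpose_of_trivial,
      RCLike.ofReal_real_eq_id, Function.id_comp] at this
  · intro i
    set v : Fin n → ℝ := ⇑(hA.eigenvectorBasis i) with hv
    have hmv : A *ᵥ v = hA.eigenvalues i • v := hA.mulVec_eigenvectorBasis i
    have hvv : dotProduct v v = 1 := by
      have hnorm := hA.eigenvectorBasis.orthonormal.1 i
      have : (⟪hA.eigenvectorBasis i, hA.eigenvectorBasis i⟫_ℝ) = 1 := by
        rw [real_inner_self_eq_norm_sq, hnorm]; norm_num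
      rwa [EuclideanSpace.inner_eq_star_dotProduct] at this
    have heq : dotProduct v (A *ᵥ v) = hA.eigenvalues i := by
      rw [hmv, dotProduct_smul, smul_eq_mul, hvv, mul_one]
    constructor
    · have := h1.dotProduct_mulVec_nonneg v
      rw [sub_mulVec, dotProduct_sub, smul_mulVec, one_mulVec, dotProduct_smul] at this
      simp only [star_trivial, smul_eq_mul, hvv, mul_one, heq] at this
      linarith
    · have := h2.dotProduct_mulVec_nonneg v
      rw [sub_mulVec, dotProduct_sub, smul_mulVec, one_mulVec, dotProduct_smul] at this
      simp only [star_trivial, smul_eq_mul, hvv, mul_one, heq] at this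
      linarith
  · have := hA.det_eq_prod_eigenvalues
    exact_mod_cast this

lemma trace_conj_diag {n : ℕ} (W : Matrix (Fin n) (Fin n) ℝ) (d e : Fin n → ℝ) :
    (diagonal d * W * diagonal e * Wᵀ).trace = ∑ i, ∑ j, d i * W i j ^ 2 * e j := by
  simp only [Matrix.trace, Matrix.diag, mul_apply, diagonal_apply, transpose_apply,
    ite_mul, zero_mul, Finset.sum_ite_eq, Finset.mem_univ, if_true, mul_ite, mul_zero,
    Finset.sum_ite_eq', Finset.sum_mul]
  apply Finset.sum_congr rfl; intro i _
  apply Finset.sum_congr rfl; intro j _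
  ring

lemma trace_conj_pair {n : ℕ} (U V : Matrix (Fin n) (Fin n) ℝ) (hU : Uᵀ * U = 1)
    (hU2 : U * Uᵀ = 1) (d e : Fin n → ℝ) :
    (U * diagonal d * Uᵀ * (V * diagonal e * Vᵀ)).trace
      = ∑ i, ∑ j, d i * (Uᵀ * V) i j ^ 2 * e j := by
  have h1 : U * diagonal d * Uᵀ * (V * diagonal e * Vᵀ)
      = U * (diagonal d * (Uᵀ * V) * diagonal e * (Uᵀ * V)ᵀ) * Uᵀ := by
    rw [transpose_mul, transpose_transpose]
    have hV : Vᵀ = Vᵀ * (U * Uᵀ) := by rw [hU2, Matrix.mul_one]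
    conv_lhs => rw [hV]
    simp only [Matrix.mul_assoc]
  rw [h1, Matrix.trace_mul_comm, ← Matrix.mul_assoc, ← Matrix.mul_assoc, hU, Matrix.one_mul,
    trace_conj_diag]

lemma diag_sum_one {n : ℕ} (d e : Fin n → ℝ) :
    ∑ i, ∑ j, d i * ((1 : Matrix (Fin n) (Fin n) ℝ) i j) ^ 2 * e j = ∑ i, d i * e i := by
  simp [one_apply, apply_ite, ite_pow, mul_ite, ite_mul, Finset.sum_ite_eq']

lemma row_sq {n : ℕ} (M : Matrix (Fin n) (Fin n) ℝ) (h : M * Mᵀ = 1) (i : Fin n) :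
    ∑ j, M i j ^ 2 = 1 := by
  have h2 := congrFun (congrFun h i) i
  simpa [Matrix.mul_apply, Matrix.one_apply, sq] using h2

lemma col_sq {n : ℕ} (M : Matrix (Fin n) (Fin n) ℝ) (h : Mᵀ * M = 1) (j : Fin n) :
    ∑ i, M i j ^ 2 = 1 := by
  have h2 := congrFun (congrFun h j) j
  simpa [Matrix.mul_apply, Matrix.one_apply, sq, mul_comm] using h2

lemma dsum_congr {n : ℕ} {f g : Fin n → Fin n → ℝ} (h : ∀ i j, f i j = g i j) :
    ∑ i, ∑ j, f i j = ∑ i, ∑ j, g i j :=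
  Finset.sum_congr rfl fun i _ => Finset.sum_congr rfl fun j _ => h i j

lemma dsum_sub {n : ℕ} (f g : Fin n → Fin n → ℝ) :
    ∑ i, ∑ j, (f i j - g i j) = (∑ i, ∑ j, f i j) - ∑ i, ∑ j, g i j := by
  simp [Finset.sum_sub_distrib]

lemma dsum_comb {n : ℕ} (f g h k : Fin n → Fin n → ℝ)
    (hpt : ∀ i j, f i j - 2 * g i j + h i j = k i j) :
    (∑ i, ∑ j, f i j) - 2 * (∑ i, ∑ j, g i j) + (∑ i, ∑ j, h i j) = ∑ i, ∑ j, k i j := by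
  simp only [← dsum_congr hpt, Finset.sum_add_distrib, Finset.sum_sub_distrib, Finset.mul_sum]

lemma logdet_key {n : ℕ} {A B : Matrix (Fin n) (Fin n) ℝ} {a b : ℝ} (ha : 0 < a) (hb : 0 < b)
    (hAs : A.IsSymm) (hBs : B.IsSymm)
    (hA1 : (A - a • (1 : Matrix (Fin n) (Fin n) ℝ)).PosSemidef)
    (hA2 : (b • (1 : Matrix (Fin n) (Fin n) ℝ) - A).PosSemidef)
    (hB1 : (B - a • (1 : Matrix (Fin n) (Fin n) ℝ)).PosSemidef)
    (hB2 : (b • (1 : Matrix (Fin n) (Fin n) ℝ) - B).PosSemidef) :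
    Real.log B.det - Real.log A.det ≤
      (A⁻¹ * (B - A)).trace - (∑ i, ∑ j, (B i j - A i j) ^ 2) / (2 * b ^ 2) := by
  have hAh : A.IsHermitian := by
    rw [Matrix.IsHermitian, conjTranspose_eq_transpose_of_trivial]; exact hAs
  have hBh : B.IsHermitian := by
    rw [Matrix.IsHermitian, conjTranspose_eq_transpose_of_trivial]; exact hBs
  obtain ⟨U, lam, hUU, hUtU, hAeq, hlam, hAdet⟩ := spectral_real hAh hA1 hA2
  obtain ⟨V, mu, hVV, hVtV, hBeq, hmu, hBdet⟩ := spectral_real hBh hB1 hB2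
  have hlp : ∀ i, 0 < lam i := fun i => lt_of_lt_of_le ha (hlam i).1
  have hmp : ∀ i, 0 < mu i := fun i => lt_of_lt_of_le ha (hmu i).1
  -- orthogonality of W = Uᵀ * V
  have hWW : (Uᵀ * V) * (Uᵀ * V)ᵀ = 1 := by
    rw [transpose_mul, transpose_transpose, Matrix.mul_assoc, ← Matrix.mul_assoc V Vᵀ U,
      hVV, Matrix.one_mul, hUtU]
  have hWtW : (Uᵀ * V)ᵀ * (Uᵀ * V) = 1 := by
    rw [transpose_mul, transpose_transpose, Matrix.mul_assoc, ← Matrix.mul_assoc U Uᵀ V,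
      hUU, Matrix.one_mul, hVtV]
  have hrow : ∀ i, ∑ j, (Uᵀ * V) i j ^ 2 = 1 := row_sq _ hWW
  have hcol : ∀ j, ∑ i, (Uᵀ * V) i j ^ 2 = 1 := col_sq _ hWtW
  -- inverse formula
  have hdet : IsUnit A.det := by
    rw [hAdet]
    exact (Finset.prod_pos (fun i _ => hlp i)).ne'.isUnit
  have hAinv : A⁻¹ = U * diagonal (fun i => (lam i)⁻¹) * Uᵀ := by
    apply inv_eq_right_inv
    rw [hAeq]
    simp only [Matrix.mul_assoc]
    rw [← Matrix.mul_assoc Uᵀ U, hUtU, Matrix.one_mul,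
      ← Matrix.mul_assoc (diagonal lam) (diagonal fun i => (lam i)⁻¹), diagonal_mul_diagonal]
    have : (fun i => lam i * (lam i)⁻¹) = fun _ : Fin n => (1 : ℝ) := by
      funext i; exact mul_inv_cancel₀ (hlp i).ne'
    rw [this, diagonal_one, Matrix.one_mul, hUU]
  -- trace identities
  have hT1 : (A⁻¹ * B).trace = ∑ i, ∑ j, (lam i)⁻¹ * (Uᵀ * V) i j ^ 2 * mu j := by
    rw [hAinv, hBeq, Matrix.mul_assoc (U * diagonal fun i => (lam i)⁻¹) Uᵀ,
      ← Matrix.mul_assoc (U * diagonal fun i => (lam i)⁻¹) Uᵀ]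
    exact trace_conj_pair U V hUtU hUU _ _
  have hT2 : (A⁻¹ * A).trace = (n : ℝ) := by
    rw [Matrix.nonsing_inv_mul A hdet, trace_one]
    simp
  have hAB : (A * B).trace = ∑ i, ∑ j, lam i * (Uᵀ * V) i j ^ 2 * mu j := by
    rw [hAeq, hBeq]
    rw [Matrix.mul_assoc (U * diagonal lam) Uᵀ, ← Matrix.mul_assoc (U * diagonal lam) Uᵀ]
    exact trace_conj_pair U V hUtU hUU _ _
  have hAA : (A * A).trace = ∑ i, lam i * lam i := by
    rw [hAeq]
    rw [Matrix.mul_assoc (U * diagonal lam) Uᵀ, ← Matrix.mul_assoc (U * diagonal lam) Uᵀ]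
    rw [trace_conj_pair U U hUtU hUU, hUtU, diag_sum_one]
  have hBB : (B * B).trace = ∑ i, mu i * mu i := by
    rw [hBeq]
    rw [Matrix.mul_assoc (V * diagonal mu) Vᵀ, ← Matrix.mul_assoc (V * diagonal mu) Vᵀ]
    rw [trace_conj_pair V V hVtV hVV, hVtV, diag_sum_one]
  -- Frobenius norm of B - A
  have hFr : ∑ i, ∑ j, (B i j - A i j) ^ 2
      = (B * B).trace - 2 * (A * B).trace + (A * A).trace := by
    have h1 : ((B - A) * (B - A)).trace = ∑ i, ∑ j, (B i j - A i j) * (B j i - A j i) := by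
      simp [Matrix.trace, Matrix.diag, Matrix.mul_apply, Matrix.sub_apply]
    have h2 : ((B - A) * (B - A)).trace
        = (B * B).trace - 2 * (A * B).trace + (A * A).trace := by
      rw [Matrix.sub_mul, Matrix.mul_sub, Matrix.mul_sub, Matrix.trace_sub, Matrix.trace_sub,
        Matrix.trace_sub, Matrix.trace_mul_comm B A]
      ring
    rw [← h2, h1]
    apply Finset.sum_congr rfl; intro i _
    apply Finset.sum_congr rfl; intro j _
    have hbji : B j i = B i j := by rw [← hBs.apply i j]
    have haji : A j i = A i j := by rw [← hAs.apply i j]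
    rw [hbji, haji, sq]
  -- expand single sums to double sums
  have hAA' : ∑ i, lam i * lam i = ∑ i, ∑ j, (Uᵀ * V) i j ^ 2 * lam i ^ 2 := by
    apply Finset.sum_congr rfl; intro i _
    rw [← Finset.sum_mul, hrow i, one_mul, sq]
  have hBB' : ∑ i, mu i * mu i = ∑ i, ∑ j, (Uᵀ * V) i j ^ 2 * mu j ^ 2 := by
    rw [Finset.sum_comm]
    apply Finset.sum_congr rfl; intro j _
    rw [← Finset.sum_mul, hcol j, one_mul, sq]
  have hn : (n : ℝ) = ∑ i, ∑ j, ((Uᵀ * V) i j ^ 2 : ℝ) := by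
    rw [Finset.sum_congr rfl (fun i _ => hrow i)]
    simp
  have hFr' : ∑ i, ∑ j, (B i j - A i j) ^ 2
      = ∑ i, ∑ j, (Uᵀ * V) i j ^ 2 * (mu j - lam i) ^ 2 := by
    rw [hFr, hBB, hAA, hBB', hAA', hAB]
    exact dsum_comb _ _ _ _ (fun i j => by ring)
  -- log det identities
  have hlogA : Real.log A.det = ∑ i, ∑ j, (Uᵀ * V) i j ^ 2 * Real.log (lam i) := by
    rw [hAdet, Real.log_prod (fun i _ => (hlp i).ne')]
    apply Finset.sum_congr rfl; intro i _
    rw [← Finset.sum_mul, hrow i, one_mul]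
  have hlogB : Real.log B.det = ∑ i, ∑ j, (Uᵀ * V) i j ^ 2 * Real.log (mu j) := by
    rw [hBdet, Real.log_prod (fun i _ => (hmp i).ne'), Finset.sum_comm]
    apply Finset.sum_congr rfl; intro j _
    rw [← Finset.sum_mul, hcol j, one_mul]
  -- main inequality
  have key : ∑ i, ∑ j, (Uᵀ * V) i j ^ 2 * (Real.log (mu j) - Real.log (lam i))
      ≤ ∑ i, ∑ j, (Uᵀ * V) i j ^ 2 *
        (mu j / lam i - 1 - (mu j - lam i) ^ 2 / (2 * b ^ 2)) := by
    apply Finset.sum_le_sum; intro i _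
    apply Finset.sum_le_sum; intro j _
    exact mul_le_mul_of_nonneg_left
      (scalar_key (hlp i) (hlam i).2 (hmp j) (hmu j).2) (sq_nonneg _)
  -- rewrite both sides of key
  have keyL : ∑ i, ∑ j, (Uᵀ * V) i j ^ 2 * (Real.log (mu j) - Real.log (lam i))
      = Real.log B.det - Real.log A.det := by
    rw [hlogA, hlogB, ← dsum_sub]
    exact dsum_congr (fun i j => by ring)
  have keyR : ∑ i, ∑ j, (Uᵀ * V) i j ^ 2 *
        (mu j / lam i - 1 - (mu j - lam i) ^ 2 / (2 * b ^ 2))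
      = (A⁻¹ * (B - A)).trace - (∑ i, ∑ j, (B i j - A i j) ^ 2) / (2 * b ^ 2) := by
    rw [Matrix.mul_sub, Matrix.trace_sub, hT1, hT2, hn, hFr']
    have hdiv : (∑ i, ∑ j, (Uᵀ * V) i j ^ 2 * (mu j - lam i) ^ 2) / (2 * b ^ 2)
        = ∑ i, ∑ j, ((Uᵀ * V) i j ^ 2 * (mu j - lam i) ^ 2) / (2 * b ^ 2) := by
      simp [Finset.sum_div]
    rw [hdiv, ← dsum_sub, ← dsum_sub]
    exact dsum_congr (fun i j => by rw [div_eq_mul_inv]; ring)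
  rw [keyL, keyR] at key
  exact key

set_option maxHeartbeats 1000000 in
/-- Let `F(Δ) = ⟨S, Δ+P*⟩ - log det(Δ+P*) + α⟨G,|Δ+P*|⟩` on the feasible
set `{Δ symmetric : a·I ⪯ Δ+P* ⪯ b·I}`, where a·I ⪯ P* ⪯ b·I, 0 < a ≤ b, α > 0, G has
entries in (0, G_max], and `|S_{ij} - C*_{ij}| ≤ α` for all i,j with C* = (P*)⁻¹.
Then every feasible Δ with `‖Δ‖_F > 2b²(1+G_max)αn` satisfies F(Δ) > F(0); consequently
any minimizer Δ̂ of F over the feasible set satisfies `‖Δ̂‖_F ≤ 2b²(1+G_max)αn`. -/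
theorem stmt_16 {n : ℕ} (S Pstar G : Matrix (Fin n) (Fin n) ℝ)
    (a b α Gmax : ℝ) (ha : 0 < a) (hab : a ≤ b) (hα : 0 < α)
    (hSsymm : S.IsSymm) (hPsymm : Pstar.IsSymm)
    (hPa : (Pstar - a • (1 : Matrix (Fin n) (Fin n) ℝ)).PosSemidef)
    (hPb : (b • (1 : Matrix (Fin n) (Fin n) ℝ) - Pstar).PosSemidef)
    (hG : ∀ i j, 0 < G i j ∧ G i j ≤ Gmax)
    (hSC : ∀ i j, |S i j - (Pstar⁻¹) i j| ≤ α)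
    (F : Matrix (Fin n) (Fin n) ℝ → ℝ)
    (hF : F = fun Δ => (Sᵀ * (Δ + Pstar)).trace - Real.log (Δ + Pstar).det +
      α * ∑ i, ∑ j, G i j * |(Δ + Pstar) i j|)
    (feas : Matrix (Fin n) (Fin n) ℝ → Prop)
    (hfeas : feas = fun Δ => Δ.IsSymm ∧
      (Δ + Pstar - a • (1 : Matrix (Fin n) (Fin n) ℝ)).PosSemidef ∧
      (b • (1 : Matrix (Fin n) (Fin n) ℝ) - (Δ + Pstar)).PosSemidef) :
    (∀ Δ : Matrix (Fin n) (Fin n) ℝ, feas Δ →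
      2 * b ^ 2 * (1 + Gmax) * α * n < Real.sqrt (∑ i, ∑ j, (Δ i j) ^ 2) →
      F 0 < F Δ) ∧
    ∀ Δhat : Matrix (Fin n) (Fin n) ℝ, feas Δhat →
      (∀ Δ : Matrix (Fin n) (Fin n) ℝ, feas Δ → F Δhat ≤ F Δ) →
      Real.sqrt (∑ i, ∑ j, (Δhat i j) ^ 2) ≤ 2 * b ^ 2 * (1 + Gmax) * α * n := by
  subst hF hfeas
  have hb : 0 < b := lt_of_lt_of_le ha hab
  have part1 : ∀ Δ : Matrix (Fin n) (Fin n) ℝ,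
      (Δ.IsSymm ∧ (Δ + Pstar - a • (1 : Matrix (Fin n) (Fin n) ℝ)).PosSemidef ∧
        (b • (1 : Matrix (Fin n) (Fin n) ℝ) - (Δ + Pstar)).PosSemidef) →
      2 * b ^ 2 * (1 + Gmax) * α * n < Real.sqrt (∑ i, ∑ j, (Δ i j) ^ 2) →
      ((Sᵀ * ((0 : Matrix (Fin n) (Fin n) ℝ) + Pstar)).trace
          - Real.log ((0 : Matrix (Fin n) (Fin n) ℝ) + Pstar).det +
          α * ∑ i, ∑ j, G i j * |((0 : Matrix (Fin n) (Fin n) ℝ) + Pstar) i j|) <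
        ((Sᵀ * (Δ + Pstar)).trace - Real.log (Δ + Pstar).det +
          α * ∑ i, ∑ j, G i j * |(Δ + Pstar) i j|) := by
    intro Δ hfe hr
    obtain ⟨hΔs, hfa, hfb⟩ := hfe
    rcases Nat.eq_zero_or_pos n with hn | hn
    · exfalso
      subst hn
      simp at hr
    -- n ≥ 1
    have hGmax : 0 < Gmax :=
      lt_of_lt_of_le (hG ⟨0, hn⟩ ⟨0, hn⟩).1 (hG ⟨0, hn⟩ ⟨0, hn⟩).2
    have h1G : (0:ℝ) < 1 + Gmax := by linarith
    have hBsymm : (Δ + Pstar).IsSymm := hΔs.add hPsymm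
    -- core strong concavity
    have hcore := logdet_key (B := Δ + Pstar) ha hb hPsymm hBsymm hPa hPb hfa hfb
    have hBA : Δ + Pstar - Pstar = Δ := add_sub_cancel_right Δ Pstar
    rw [hBA] at hcore
    have hXeq : ∑ i, ∑ j, ((Δ + Pstar) i j - Pstar i j) ^ 2 = ∑ i, ∑ j, (Δ i j) ^ 2 :=
      dsum_congr (fun i j => by simp [Matrix.add_apply])
    rw [hXeq] at hcore
    -- trace identities
    have htr : (Sᵀ * (Δ + Pstar)).trace
        = (Sᵀ * Pstar).trace + ∑ i, ∑ j, S i j * Δ i j := by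
      rw [Matrix.mul_add, Matrix.trace_add, add_comm]
      congr 1
      simp only [Matrix.trace, Matrix.diag, Matrix.mul_apply, Matrix.transpose_apply]
      rw [Finset.sum_comm]
    have hinvtr : (Pstar⁻¹ * Δ).trace = ∑ i, ∑ j, (Pstar⁻¹) i j * Δ i j := by
      simp only [Matrix.trace, Matrix.diag, Matrix.mul_apply]
      apply Finset.sum_congr rfl; intro i _
      apply Finset.sum_congr rfl; intro j _
      rw [hΔs.apply i j]
    rw [hinvtr] at hcore
    -- entrywise bound for the ℓ¹ pairing with S - C*
    have hb1 : ∑ i, ∑ j, (-(α * |Δ i j|))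
        ≤ ∑ i, ∑ j, (S i j * Δ i j - (Pstar⁻¹) i j * Δ i j) := by
      apply Finset.sum_le_sum; intro i _
      apply Finset.sum_le_sum; intro j _
      have h := hSC i j
      have h2 : |(S i j - (Pstar⁻¹) i j) * Δ i j| ≤ α * |Δ i j| := by
        rw [abs_mul]
        exact mul_le_mul_of_nonneg_right h (abs_nonneg _)
      have h3 := neg_abs_le ((S i j - (Pstar⁻¹) i j) * Δ i j)
      nlinarith [h2, h3]
    have hb1' : -(α * ∑ i, ∑ j, |Δ i j|)
        ≤ (∑ i, ∑ j, S i j * Δ i j) - ∑ i, ∑ j, (Pstar⁻¹) i j * Δ i j := by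
      have e1 : ∑ i, ∑ j, (-(α * |Δ i j|)) = -(α * ∑ i, ∑ j, |Δ i j|) := by
        simp [Finset.mul_sum]
      rw [← e1, ← dsum_sub]
      exact hb1
    -- entrywise bound for the weighted ℓ¹ penalty
    have hGb : ∑ i, ∑ j, (-(Gmax * |Δ i j|))
        ≤ ∑ i, ∑ j, (G i j * |(Δ + Pstar) i j| - G i j * |Pstar i j|) := by
      apply Finset.sum_le_sum; intro i _
      apply Finset.sum_le_sum; intro j _
      have habs : |Pstar i j| - |(Δ + Pstar) i j| ≤ |Δ i j| := by
        have := abs_sub_abs_le_abs_sub (Pstar i j) ((Δ + Pstar) i j)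
        have he : Pstar i j - (Δ + Pstar) i j = -(Δ i j) := by
          simp [Matrix.add_apply]
        rw [he, abs_neg] at this
        exact this
      have hg1 := (hG i j).1
      have hg2 := (hG i j).2
      nlinarith [mul_le_mul_of_nonneg_left habs hg1.le,
        mul_le_mul_of_nonneg_right hg2 (abs_nonneg (Δ i j))]
    have hGb' : -(α * (Gmax * ∑ i, ∑ j, |Δ i j|))
        ≤ α * (∑ i, ∑ j, G i j * |(Δ + Pstar) i j|)
          - α * (∑ i, ∑ j, G i j * |Pstar i j|) := by
      have e1 : ∑ i, ∑ j, (-(Gmax * |Δ i j|)) = -(Gmax * ∑ i, ∑ j, |Δ i j|) := by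
        simp [Finset.mul_sum]
      rw [e1] at hGb
      have h := mul_le_mul_of_nonneg_left hGb hα.le
      rw [dsum_sub] at h
      linarith [h]
    -- Cauchy–Schwarz : ℓ¹ ≤ n · Frobenius
    have hXnn : (0:ℝ) ≤ ∑ i, ∑ j, (Δ i j) ^ 2 :=
      Finset.sum_nonneg fun i _ => Finset.sum_nonneg fun j _ => sq_nonneg _
    have hTnn : (0:ℝ) ≤ ∑ i, ∑ j, |Δ i j| :=
      Finset.sum_nonneg fun i _ => Finset.sum_nonneg fun j _ => abs_nonneg _
    have hXr : ∑ i, ∑ j, (Δ i j) ^ 2 = (Real.sqrt (∑ i, ∑ j, (Δ i j) ^ 2)) ^ 2 :=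
      (Real.sq_sqrt hXnn).symm
    have hCS : ∑ i, ∑ j, |Δ i j| ≤ (n : ℝ) * Real.sqrt (∑ i, ∑ j, (Δ i j) ^ 2) := by
      have h := sq_sum_le_card_mul_sum_sq
        (s := (Finset.univ : Finset (Fin n × Fin n))) (f := fun p => |Δ p.1 p.2|)
      rw [← Finset.univ_product_univ, Finset.sum_product, Finset.sum_product] at h
      simp only [sq_abs] at h
      have hcard : ((Finset.univ ×ˢ Finset.univ : Finset (Fin n × Fin n)).card : ℝ)
          = (n : ℝ) * (n : ℝ) := by
        simp [Finset.card_univ]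
      rw [hcard] at h
      have h2 := Real.sqrt_le_sqrt h
      rw [Real.sqrt_sq hTnn] at h2
      have h3 : Real.sqrt ((n:ℝ) * (n:ℝ) * ∑ i, ∑ j, (Δ i j) ^ 2)
          = (n:ℝ) * Real.sqrt (∑ i, ∑ j, (Δ i j) ^ 2) := by
        rw [show ((n:ℝ) * (n:ℝ) * ∑ i, ∑ j, (Δ i j) ^ 2)
            = ((n:ℝ))^2 * ∑ i, ∑ j, (Δ i j) ^ 2 by ring,
          Real.sqrt_mul (sq_nonneg _), Real.sqrt_sq (Nat.cast_nonneg n)]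
      rw [h3] at h2
      exact h2
    -- final quantitative comparison
    set r := Real.sqrt (∑ i, ∑ j, (Δ i j) ^ 2) with hrdef
    have hRpos : 0 < 2 * b ^ 2 * (1 + Gmax) * α * n := by
      apply mul_pos (mul_pos (mul_pos (by positivity) h1G) hα)
      exact_mod_cast hn
    have hr0 : 0 < r := lt_trans hRpos hr
    have step1 : α * (1 + Gmax) * (∑ i, ∑ j, |Δ i j|) ≤ α * (1 + Gmax) * ((n:ℝ) * r) :=
      mul_le_mul_of_nonneg_left hCS (by positivity)
    have step2 : α * (1 + Gmax) * ((n:ℝ) * r) < (∑ i, ∑ j, (Δ i j) ^ 2) / (2 * b ^ 2) := by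
      rw [hXr, pow_two, mul_div_assoc]
      have h2 : α * (1 + Gmax) * (n:ℝ) < r / (2 * b ^ 2) := by
        rw [lt_div_iff₀ (by positivity)]
        calc α * (1 + Gmax) * (n:ℝ) * (2 * b ^ 2) = 2 * b ^ 2 * (1 + Gmax) * α * n := by ring
        _ < r := hr
      calc α * (1 + Gmax) * ((n:ℝ) * r) = (α * (1 + Gmax) * (n:ℝ)) * r := by ring
      _ < (r / (2 * b ^ 2)) * r := mul_lt_mul_of_pos_right h2 hr0
      _ = r * (r / (2 * b ^ 2)) := mul_comm _ _
    rw [htr]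
    simp only [zero_add]
    nlinarith [hcore, hb1', hGb', step1, step2]
  refine ⟨part1, ?_⟩
  intro Δhat hfe hmin
  by_contra hlt
  push_neg at hlt
  have h0 : ((0 : Matrix (Fin n) (Fin n) ℝ).IsSymm ∧
      ((0 : Matrix (Fin n) (Fin n) ℝ) + Pstar - a • (1 : Matrix (Fin n) (Fin n) ℝ)).PosSemidef ∧
      (b • (1 : Matrix (Fin n) (Fin n) ℝ) - ((0 : Matrix (Fin n) (Fin n) ℝ) + Pstar)).PosSemidef) := by
    refine ⟨Matrix.isSymm_zero, ?_, ?_⟩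
    · simpa using hPa
    · simpa using hPb
  have hcontr := part1 Δhat hfe hlt
  have h2 := hmin 0 h0
  simp only [] at h2
  linarith [hcontr, h2]
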